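/- Let G be a group with a left-invariant total order ≤ and let W₁, W₂ ∈ G with XW₁ = W₁X where X ∈ G satisfies W₁^3 = W₂^4 = X and 1 < X. Then X < (W₁·W₂)^3, i.e. (W₁W₂)^3 > W₁^3. -/

import Mathlib

theorem stmt9 {G : Type*} [Group G] [LinearOrder G]
    [CovariantClass G G (· * ·) (· ≤ ·)]
    (W₁ W₂ X : G) (hcomm : W₁ * X = X * W₁)
    (h1 : W₁ ^ 3 = X) (h2 : W₂ ^ 4 = X) (hX : 1 < X) :
    X < (W₁ * W₂) ^ 3 := by
  have key : ∀ a : G, a ^ 4 = X → 1 < a := by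
    intro a ha
    by_contra h
    push_neg at h
    have h4 : a ^ 4 ≤ 1 := pow_le_one' h 4
    rw [ha] at h4
    exact absurd hX (not_lt.2 h4)
  have hXc : W₁⁻¹ * X * W₁ = X := by
    rw [mul_assoc, ← hcomm, ← mul_assoc, inv_mul_cancel, one_mul]
  set c₁ : G := W₁⁻¹ * W₂ * W₁ with hc₁
  set c₂ : G := W₁⁻¹ * c₁ * W₁ with hc₂
  have hc₁4 : c₁ ^ 4 = X := by
    rw [hc₁, ← h2]
    calc (W₁⁻¹ * W₂ * W₁) ^ 4 = W₁⁻¹ * W₂ ^ 4 * W₁ := by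
          simpa using conj_pow (a := W₁⁻¹) (b := W₂) (i := 4)
      _ = W₁⁻¹ * X * W₁ := by rw [h2]
      _ = X := hXc
      _ = W₂ ^ 4 := h2.symm
  have hc₂4 : c₂ ^ 4 = X := by
    rw [hc₂]
    calc (W₁⁻¹ * c₁ * W₁) ^ 4 = W₁⁻¹ * c₁ ^ 4 * W₁ := by
          simpa using conj_pow (a := W₁⁻¹) (b := c₁) (i := 4)
      _ = W₁⁻¹ * X * W₁ := by rw [hc₁4]
      _ = X := hXc
  have p1 : 1 < c₁ := key _ hc₁4
  have p2 : 1 < c₂ := key _ hc₂4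
  have p0 : 1 < W₂ := key _ h2
  have hprod : 1 < c₂ * c₁ * W₂ := one_lt_mul' (one_lt_mul' p2 p1) p0
  have hid : (W₁ * W₂) ^ 3 = X * (c₂ * c₁ * W₂) := by
    rw [hc₂, hc₁, ← h1]
    simp only [pow_succ, pow_zero, one_mul, mul_assoc, mul_inv_cancel_left, inv_mul_cancel_left]
  rw [hid]
  calc X = X * 1 := (mul_one X).symm
    _ < X * (c₂ * c₁ * W₂) := mul_lt_mul_right hprod X
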